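/- Let V be a real symmetric positive definite m×m matrix, Σ a real symmetric positive semidefinite m×m matrix, and Δ ∈ ℝ^{n×m} a matrix satisfying ‖Δ V^{1/2}‖_F ≤ β for some β ≥ 0, where V^{1/2} is the positive semidefinite square root of V. Then ‖Σ Δᵀ‖_F ≤ β · ‖V^{1/2}‖₂ · tr(V^{-1} Σ). -/

import Mathlib

open Matrix MeasureTheory ProbabilityTheory Filter

/-- Frobenius norm of a real matrix. -/
noncomputable def frob {α β : Type*} [Fintype α] [Fintype β] (A : Matrix α β ℝ) : ℝ :=
  Real.sqrt (∑ i, ∑ j, (A i j) ^ 2)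

/-- Spectral norm (largest singular value) of a real matrix. -/
noncomputable def spec {α β : Type*} [Fintype α] [Fintype β] [DecidableEq β]
    (A : Matrix α β ℝ) : ℝ :=
  ‖LinearMap.toContinuousLinearMap (Matrix.toEuclideanLin A)‖

/-- The positive semidefinite square root of a positive semidefinite real matrix
(junk value `0` if the matrix is not positive semidefinite). -/
noncomputable def msqrt {α : Type*} [Fintype α] [DecidableEq α]
    (M : Matrix α α ℝ) : Matrix α α ℝ :=
  open scoped Classical in
  if h : M.PosSemidef then
    h.1.eigenvectorUnitary.1 * diagonal ((RCLike.ofReal : ℝ → ℝ) ∘ Real.sqrt ∘ h.1.eigenvalues) *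
      (star h.1.eigenvectorUnitary : Matrix α α ℝ)
  else 0

/-- Euclidean norm of a real vector. -/
noncomputable def vnorm {α : Type*} [Fintype α] (v : α → ℝ) : ℝ :=
  Real.sqrt (∑ i, (v i) ^ 2)

lemma frob_nonneg {α β : Type*} [Fintype α] [Fintype β] (A : Matrix α β ℝ) : 0 ≤ frob A :=
  Real.sqrt_nonneg _

lemma spec_nonneg {α β : Type*} [Fintype α] [Fintype β] [DecidableEq β] (A : Matrix α β ℝ) :
    0 ≤ spec A := norm_nonneg _

lemma frob_transpose {α β : Type*} [Fintype α] [Fintype β] (A : Matrix α β ℝ) :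
    frob Aᵀ = frob A := by
  unfold frob
  rw [Finset.sum_comm]
  rfl

lemma mulVec_sq_le {α β : Type*} [Fintype α] [Fintype β] [DecidableEq β]
    (A : Matrix α β ℝ) (x : β → ℝ) :
    ∑ i, (A.mulVec x i) ^ 2 ≤ spec A ^ 2 * ∑ j, (x j) ^ 2 := by
  have h := (LinearMap.toContinuousLinearMap (Matrix.toEuclideanLin A)).le_opNorm
    ((WithLp.equiv 2 (β → ℝ)).symm x)
  rw [LinearMap.coe_toContinuousLinearMap', WithLp.equiv_symm_apply,
    Matrix.toEuclideanLin_apply_piLp_toLp,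
    EuclideanSpace.norm_eq, EuclideanSpace.norm_eq] at h
  simp only [PiLp.toLp_apply, Real.norm_eq_abs, sq_abs] at h
  have h2 : Real.sqrt (∑ i, (A.mulVec x i) ^ 2) ^ 2 ≤ (spec A * Real.sqrt (∑ j, (x j) ^ 2)) ^ 2 := by
    apply pow_le_pow_left₀ (Real.sqrt_nonneg _) h
  rwa [Real.sq_sqrt (by positivity), mul_pow, Real.sq_sqrt (by positivity)] at h2

lemma frob_mul_le {α β γ : Type*} [Fintype α] [Fintype β] [Fintype γ] [DecidableEq β]
    (A : Matrix α β ℝ) (B : Matrix β γ ℝ) :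
    frob (A * B) ≤ spec A * frob B := by
  have key : ∑ i, ∑ j, ((A * B) i j) ^ 2 ≤ spec A ^ 2 * ∑ k, ∑ j, (B k j) ^ 2 := by
    rw [Finset.sum_comm]
    calc ∑ j, ∑ i, ((A * B) i j) ^ 2
        ≤ ∑ j, spec A ^ 2 * ∑ k, (B k j) ^ 2 := by
          apply Finset.sum_le_sum
          intro j _
          have := mulVec_sq_le A (fun k => B k j)
          simpa [Matrix.mulVec, Matrix.mul_apply, dotProduct] using this
      _ = spec A ^ 2 * ∑ k, ∑ j, (B k j) ^ 2 := by
          rw [← Finset.mul_sum, Finset.sum_comm]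
  have : frob (A * B) ^ 2 ≤ (spec A * frob B) ^ 2 := by
    rw [frob, Real.sq_sqrt (by positivity), mul_pow, frob, Real.sq_sqrt (by positivity)]
    exact key
  have h0 : 0 ≤ spec A * frob B := mul_nonneg (spec_nonneg A) (frob_nonneg B)
  nlinarith [frob_nonneg (A * B)]

lemma spec_le_frob {α β : Type*} [Fintype α] [Fintype β] [DecidableEq β]
    (A : Matrix α β ℝ) : spec A ≤ frob A := by
  apply ContinuousLinearMap.opNorm_le_bound _ (frob_nonneg A)
  intro x
  rw [LinearMap.coe_toContinuousLinearMap', Matrix.toEuclideanLin_apply,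
    EuclideanSpace.norm_eq, EuclideanSpace.norm_eq]
  simp only [PiLp.toLp_apply, Real.norm_eq_abs, sq_abs]
  set y : β → ℝ := fun j => (WithLp.equiv 2 (β → ℝ)) x j with hy
  have key : ∑ i, (A.mulVec y i) ^ 2 ≤ (∑ i, ∑ j, (A i j) ^ 2) * ∑ j, (y j) ^ 2 := by
    rw [Finset.sum_mul]
    apply Finset.sum_le_sum
    intro i _
    exact Finset.sum_mul_sq_le_sq_mul_sq Finset.univ (fun j => A i j) y
  calc Real.sqrt (∑ i, (A.mulVec y i) ^ 2)
      ≤ Real.sqrt ((∑ i, ∑ j, (A i j) ^ 2) * ∑ j, (y j) ^ 2) := Real.sqrt_le_sqrt key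
    _ = frob A * Real.sqrt (∑ j, (y j) ^ 2) := by
        rw [Real.sqrt_mul (by positivity)]; rfl

lemma entry_sq_le {α : Type*} [Fintype α] [DecidableEq α] {B : Matrix α α ℝ}
    (hB : B.PosSemidef) (i j : α) : B i j ^ 2 ≤ B i i * B j j := by
  have hsym : B j i = B i j := by
    have := hB.1
    rw [Matrix.IsHermitian] at this
    conv_lhs => rw [← this]
    simp [Matrix.conjTranspose_apply]
  have hq : ∀ t : ℝ, 0 ≤ B i i * (t * t) + (2 * B i j) * t + B j j := by
    intro t
    have h0 := hB.dotProduct_mulVec_nonneg (t • (Pi.single i 1 : α → ℝ) + (Pi.single j 1 : α → ℝ))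
    simp only [star_trivial, Matrix.mulVec_add, Matrix.mulVec_smul, Matrix.mulVec_single,
      dotProduct_add, add_dotProduct, dotProduct_smul,
      smul_dotProduct, single_dotProduct, smul_eq_mul, mul_one,
      dotProduct_single, Matrix.col_apply, MulOpposite.op_one, one_smul, one_mul] at h0
    rw [hsym] at h0
    nlinarith [h0]
  have := discrim_le_zero hq
  rw [discrim] at this
  nlinarith

lemma frob_le_trace {α : Type*} [Fintype α] [DecidableEq α] {B : Matrix α α ℝ}
    (hB : B.PosSemidef) : frob B ≤ B.trace := by
  have htr : B.trace = ∑ i, B i i := rfl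
  have hdiag : ∀ i, 0 ≤ B i i := fun i => by
    have := hB.dotProduct_mulVec_nonneg (Pi.single i 1)
    simpa [dotProduct, Matrix.mulVec, Pi.single_apply] using this
  have key : ∑ i, ∑ j, (B i j) ^ 2 ≤ (∑ i, B i i) * (∑ j, B j j) := by
    rw [Finset.sum_mul_sum]
    exact Finset.sum_le_sum fun i _ => Finset.sum_le_sum fun j _ => entry_sq_le hB i j
  calc frob B ≤ Real.sqrt ((∑ i, B i i) * (∑ j, B j j)) := Real.sqrt_le_sqrt key
    _ = B.trace := by
        rw [← htr, ← sq, Real.sqrt_sq (by rw [htr]; exact Finset.sum_nonneg fun i _ => hdiag i)]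

theorem weighted_cross_term_bound {n m : ℕ}
    (V Sig : Matrix (Fin m) (Fin m) ℝ) (Δ : Matrix (Fin n) (Fin m) ℝ) (β : ℝ)
    (hβ : 0 ≤ β) (hV : V.PosDef) (hSig : Sig.PosSemidef)
    (hΔ : frob (Δ * msqrt V) ≤ β) :
    frob (Sig * Δᵀ) ≤ β * spec (msqrt V) * (V⁻¹ * Sig).trace := by
  have hVps : V.PosSemidef := hV.posSemidef
  have hWeq : msqrt V = hVps.1.eigenvectorUnitary.1 *
      diagonal ((RCLike.ofReal : ℝ → ℝ) ∘ Real.sqrt ∘ hVps.1.eigenvalues) *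
      (star hVps.1.eigenvectorUnitary : Matrix (Fin m) (Fin m) ℝ) := dif_pos hVps
  set W := msqrt V with hWdef
  have hWps : W.PosSemidef := by
    rw [hWeq, star_eq_conjTranspose]
    apply PosSemidef.mul_mul_conjTranspose_same
    rw [posSemidef_diagonal_iff]
    intro i
    simp [Real.sqrt_nonneg]
  have hWW : W * W = V := by
    rw [hWeq]
    set U : Matrix (Fin m) (Fin m) ℝ := hVps.1.eigenvectorUnitary.1 with hU
    have hUU : (star hVps.1.eigenvectorUnitary : Matrix (Fin m) (Fin m) ℝ) * U = 1 :=
      Unitary.coe_star_mul_self _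
    calc U * diagonal ((RCLike.ofReal : ℝ → ℝ) ∘ Real.sqrt ∘ hVps.1.eigenvalues) *
          (star hVps.1.eigenvectorUnitary : Matrix (Fin m) (Fin m) ℝ) *
          (U * diagonal ((RCLike.ofReal : ℝ → ℝ) ∘ Real.sqrt ∘ hVps.1.eigenvalues) *
          (star hVps.1.eigenvectorUnitary : Matrix (Fin m) (Fin m) ℝ))
        = U * (diagonal ((RCLike.ofReal : ℝ → ℝ) ∘ Real.sqrt ∘ hVps.1.eigenvalues) *
          ((star hVps.1.eigenvectorUnitary : Matrix (Fin m) (Fin m) ℝ) * U) *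
          diagonal ((RCLike.ofReal : ℝ → ℝ) ∘ Real.sqrt ∘ hVps.1.eigenvalues)) *
          (star hVps.1.eigenvectorUnitary : Matrix (Fin m) (Fin m) ℝ) := by
          simp only [Matrix.mul_assoc]
      _ = U * diagonal ((RCLike.ofReal : ℝ → ℝ) ∘ hVps.1.eigenvalues) *
          (star hVps.1.eigenvectorUnitary : Matrix (Fin m) (Fin m) ℝ) := by
          rw [hUU, Matrix.mul_one, diagonal_mul_diagonal]
          congr 3
          funext i
          simp [Real.mul_self_sqrt (hVps.eigenvalues_nonneg i)]
      _ = V := by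
          conv_rhs => rw [hVps.1.spectral_theorem]
          rw [Unitary.conjStarAlgAut_apply]
  have hWsym : Wᵀ = W := by
    have := hWps.1
    rwa [Matrix.IsHermitian, Matrix.conjTranspose_eq_transpose_of_trivial] at this
  have hSigSym : Sigᵀ = Sig := by
    have := hSig.1
    rwa [Matrix.IsHermitian, Matrix.conjTranspose_eq_transpose_of_trivial] at this
  have hdet : W.det ≠ 0 := by
    have hVdet : V.det ≠ 0 := ne_of_gt hV.det_pos
    intro h
    apply hVdet
    rw [← hWW, Matrix.det_mul, h, mul_zero]
  have hWinv : W * W⁻¹ = 1 := Matrix.mul_nonsing_inv _ (isUnit_iff_ne_zero.mpr hdet)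
  have hWinvsym : W⁻¹ᵀ = W⁻¹ := by
    have h := Matrix.transpose_nonsing_inv W
    rw [hWsym] at h
    exact h
  have hVinv : V⁻¹ = W⁻¹ * W⁻¹ := by rw [← hWW, Matrix.mul_inv_rev]
  set B := W⁻¹ * Sig * W⁻¹ with hBdef
  have hBps : B.PosSemidef := by
    have h1 : W⁻¹ᴴ = W⁻¹ := by
      rw [Matrix.conjTranspose_eq_transpose_of_trivial, hWinvsym]
    have h2 := hSig.mul_mul_conjTranspose_same W⁻¹
    rwa [h1] at h2
  have htrB : B.trace = (V⁻¹ * Sig).trace := by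
    rw [hBdef, Matrix.trace_mul_comm, ← Matrix.mul_assoc, ← hVinv]
  have e1 : Sig * Δᵀ = (Δ * Sig)ᵀ := by rw [Matrix.transpose_mul, hSigSym]
  have e2 : Sig * W⁻¹ = W * B := by
    rw [hBdef, ← Matrix.mul_assoc, ← Matrix.mul_assoc, hWinv, Matrix.one_mul]
  have e3 : (W⁻¹ * Sig)ᵀ = Sig * W⁻¹ := by
    rw [Matrix.transpose_mul, hSigSym, hWinvsym]
  have e4 : Δ * Sig = (Δ * W) * (W⁻¹ * Sig) := by
    rw [Matrix.mul_assoc, ← Matrix.mul_assoc W, hWinv, Matrix.one_mul]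
  have h5 : spec (Sig * W⁻¹) ≤ spec W * B.trace := by
    calc spec (Sig * W⁻¹) ≤ frob (Sig * W⁻¹) := spec_le_frob _
      _ = frob (W * B) := by rw [e2]
      _ ≤ spec W * frob B := frob_mul_le _ _
      _ ≤ spec W * B.trace :=
          mul_le_mul_of_nonneg_left (frob_le_trace hBps) (spec_nonneg _)
  calc frob (Sig * Δᵀ) = frob (Δ * Sig) := by rw [e1, frob_transpose]
    _ = frob ((W⁻¹ * Sig)ᵀ * (Δ * W)ᵀ) := by
        rw [← Matrix.transpose_mul, frob_transpose, e4]
    _ ≤ spec ((W⁻¹ * Sig)ᵀ) * frob ((Δ * W)ᵀ) := frob_mul_le _ _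
    _ = spec (Sig * W⁻¹) * frob (Δ * W) := by rw [e3, frob_transpose]
    _ ≤ spec (Sig * W⁻¹) * β := mul_le_mul_of_nonneg_left hΔ (spec_nonneg _)
    _ ≤ (spec W * B.trace) * β := mul_le_mul_of_nonneg_right h5 hβ
    _ = β * spec W * (V⁻¹ * Sig).trace := by rw [htrB]; ring
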